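/- The supremum of values over all policies in a teleo-environment ε (the optimal value of ε) satisfies: optimal value of ε = max over deterministic first actions a of [P(success this step given a) + P(no success this step given a) · E over s of optimal value of ε evolved by (a, (s, ⊥)) conditioned on no success]. -/

import Mathlib

open scoped ENNReal BigOperators

structure Transducer (I O : Type) [Fintype O] where
  State : Type
  init : State
  out : State → O → ℝ≥0∞
  out_sum : ∀ st, ∑ o, out st o = 1
  step : State → I → O → State

namespace Transducer

variable {I O : Type} [Fintype O]

/-- The transducer evolved by a single input-output pair. -/
def evolve (t : Transducer I O) (i : I) (o : O) : Transducer I O :=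
  { t with init := t.step t.init i o }

def stepSeq (t : Transducer I O) : t.State → List (I × O) → t.State
  | st, [] => st
  | st, p :: rest => t.stepSeq (t.step st p.1 p.2) rest

/-- The transducer evolved along a finite sequence of input-output pairs. -/
def evolveSeq (t : Transducer I O) (l : List (I × O)) : Transducer I O :=
  { t with init := t.stepSeq t.init l }

/-- Induced behaviour: conditional probability of an output sequence given an
input sequence of the same length. -/
noncomputable def beh : Transducer I O → List I → List O → ℝ≥0∞
  | _, [], [] => 1
  | t, i :: is, o :: os => t.out t.init o * beh (t.evolve i o) is os
  | _, _, _ => 0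

/-- Behavioural equality of transducers. -/
def BehEq (t u : Transducer I O) : Prop :=
  ∀ is os, t.beh is os = u.beh is os

/-- States reachable from the initial state along possible transitions. -/
inductive Reachable (t : Transducer I O) : t.State → Prop
  | init : Reachable t t.init
  | step {st : t.State} (i : I) (o : O) :
      Reachable t st → t.out st o ≠ 0 → Reachable t (t.step st i o)

/-- A transducer is deterministic if every reachable output distribution is a
point mass. -/
def Deterministic (t : Transducer I O) : Prop :=
  ∀ st, t.Reachable st → ∃ o, t.out st o = 1

end Transducer

/-- A policy: a transducer from sensor values to actions. -/
abbrev Policy (S A : Type) [Fintype A] := Transducer S A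

/-- A teleo-environment: a transducer from actions to pairs of a sensor value
and a success signal (`true` = success ⊤, `false` = ⊥). -/
abbrev Env (S A : Type) [Fintype S] := Transducer A (S × Bool)

section Value

variable {S A : Type} [Fintype S] [Fintype A]

/-- Probability that success occurs at least once within the first `n` steps of
the coupled process of a policy and a teleo-environment. -/
noncomputable def succProb : ℕ → Policy S A → Env S A → ℝ≥0∞
  | 0, _, _ => 0
  | n + 1, π, ε =>
      ∑ a : A, ∑ p : S × Bool,
        π.out π.init a * ε.out ε.init p *
          (if p.2 then 1 else succProb n (π.evolve p.1 a) (ε.evolve a p))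

/-- The value of a policy in a teleo-environment: the probability that success
occurs at least once in the coupled process. -/
noncomputable def value (π : Policy S A) (ε : Env S A) : ℝ≥0∞ :=
  ⨆ n, succProb n π ε

/-- A policy is optimal for a teleo-environment if its value is maximal among
all policies. -/
def Optimal (π : Policy S A) (ε : Env S A) : Prop :=
  ∀ π' : Policy S A, value π' ε ≤ value π ε

/-- A policy is uniquely optimal if it is optimal and every optimal policy is
behaviourally equal to it. -/
def UniquelyOptimal (π : Policy S A) (ε : Env S A) : Prop :=
  Optimal π ε ∧ ∀ π' : Policy S A, Optimal π' ε → π'.BehEq π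

/-- Probability of a finite interaction history (action, sensor value, success
signal per step) in the coupled process. -/
noncomputable def trajProbG : Policy S A → Env S A → List ((A × S) × Bool) → ℝ≥0∞
  | _, _, [] => 1
  | π, ε, (p, g) :: rest =>
      π.out π.init p.1 * ε.out ε.init (p.2, g) *
        trajProbG (π.evolve p.2 p.1) (ε.evolve p.1 (p.2, g)) rest

/-- A finite action-sensor history occurs with positive probability in the
coupled process (marginalising over the unobserved success signals). -/
def PosProb (π : Policy S A) (ε : Env S A) (h : List (A × S)) : Prop :=
  ∃ l : List ((A × S) × Bool), l.map Prod.fst = h ∧ trajProbG π ε l ≠ 0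

/-- The policy evolved along an action-sensor history (inputs are the sensor
values, outputs the actions). -/
def Policy.evolveBy (π : Policy S A) (h : List (A × S)) : Policy S A :=
  Transducer.evolveSeq π (h.map fun p => (p.2, p.1))

/-- Value-laden filtering: the environment evolved along the actions and sensor
values, with every success signal set to ⊥ (no success). -/
def Env.vlEvolveBy (ε : Env S A) (h : List (A × S)) : Env S A :=
  Transducer.evolveSeq ε (h.map fun p => (p.1, (p.2, false)))

end Value

/-- The optimal value of a teleo-environment: the supremum of values over all
policies. -/
noncomputable def optValue {S A : Type} [Fintype S] [Fintype A]
    (ε : Env S A) : ℝ≥0∞ :=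
  ⨆ π : Policy S A, value π ε

section Aux

open Transducer

variable {S A : Type} [Fintype S] [Fintype A]

/-- succProb unfolding at a successor step. -/
lemma succProb_succ (n : ℕ) (π : Policy S A) (ε : Env S A) :
    succProb (n + 1) π ε =
      ∑ a : A, ∑ p : S × Bool,
        π.out π.init a * ε.out ε.init p *
          (if p.2 then 1 else succProb n (π.evolve p.1 a) (ε.evolve a p)) := rfl

lemma succProb_le_succ : ∀ (n : ℕ) (π : Policy S A) (ε : Env S A),
    succProb n π ε ≤ succProb (n + 1) π ε
  | 0, _, _ => zero_le
  | n + 1, π, ε => by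
      rw [succProb_succ, succProb_succ]
      refine Finset.sum_le_sum fun a _ => Finset.sum_le_sum fun p _ => ?_
      refine mul_le_mul_right ?_ _
      by_cases h : p.2 <;> simp [h, succProb_le_succ n]

lemma succProb_mono {n m : ℕ} (h : n ≤ m) (π : Policy S A) (ε : Env S A) :
    succProb n π ε ≤ succProb m π ε := by
  induction m with
  | zero => simp [Nat.le_zero.mp h]
  | succ m ih =>
      rcases Nat.lt_or_ge n (m + 1) with h' | h'
      · exact (ih (Nat.lt_succ_iff.mp h')).trans (succProb_le_succ m π ε)
      · have : n = m + 1 := le_antisymm h h'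
        simp [this]

lemma succProb_le_optValue (n : ℕ) (π : Policy S A) (ε : Env S A) :
    succProb n π ε ≤ optValue ε :=
  le_trans (le_iSup (fun n => succProb n π ε) n) (le_iSup (fun π => value π ε) π)

open Classical in
instance [Nonempty A] : Nonempty (Policy S A) := by
  inhabit A
  exact ⟨{ State := Unit, init := (), out := fun _ a => if a = default then 1 else 0,
           out_sum := fun _ => by simp, step := fun _ _ _ => () }⟩

/-- Simulation lemma: succProb only depends on the induced behaviour. -/
lemma succProb_simul : ∀ (n : ℕ) (π π' : Policy S A) (f : π.State → π'.State),
    (∀ st a, π'.out (f st) a = π.out st a) →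
    (∀ st s a, f (π.step st s a) = π'.step (f st) s a) →
    f π.init = π'.init →
    ∀ ε : Env S A, succProb n π ε = succProb n π' ε
  | 0, _, _, _, _, _, _, _ => rfl
  | n + 1, π, π', f, hout, hstep, hinit, ε => by
      rw [succProb_succ, succProb_succ]
      refine Finset.sum_congr rfl fun a _ => Finset.sum_congr rfl fun p _ => ?_
      have h1 : π'.out π'.init a = π.out π.init a := by rw [← hinit, hout]
      rw [h1]
      congr 1
      by_cases h : p.2
      · simp [h]
      · simp only [h, if_false]
        exact succProb_simul n (π.evolve p.1 a) (π'.evolve p.1 a) f hout hstep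
          (by simpa [Transducer.evolve] using (hinit ▸ hstep π.init p.1 a)) _

open Classical in
/-- Policy that plays `a` first, then follows `g s` after seeing sensor `s`. -/
noncomputable def detFirst (a : A) (g : S → Policy S A) : Policy S A where
  State := Option (Σ s : S, (g s).State)
  init := none
  out st a' :=
    match st with
    | none => if a' = a then 1 else 0
    | some x => (g x.1).out x.2 a'
  out_sum st := by
    cases st with
    | none => simp
    | some x => exact (g x.1).out_sum x.2
  step st s' a' :=
    match st with
    | none => some ⟨s', (g s').init⟩
    | some x => some ⟨x.1, (g x.1).step x.2 s' a'⟩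

lemma sum_iSup_eq {ι : Type} {κ : Type*} [Nonempty κ] (s : Finset ι) (f : ι → κ → ℝ≥0∞) :
    ∑ i ∈ s, ⨆ j, f i j = ⨆ g : ι → κ, ∑ i ∈ s, f i (g i) := by
  classical
  induction s using Finset.cons_induction with
  | empty => simp
  | cons i s hi ih =>
      rw [Finset.sum_cons, ih, ENNReal.iSup_add]
      refine le_antisymm (iSup_le fun j => ?_) (iSup_le fun g => ?_)
      · rw [ENNReal.add_iSup]
        refine iSup_le fun g => le_iSup_of_le (Function.update g i j) ?_
        rw [Finset.sum_cons, Function.update_self]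
        refine add_le_add_right (le_of_eq (Finset.sum_congr rfl fun i' hi' => by
          rw [Function.update_of_ne (by rintro rfl; exact hi hi')]).symm) _
      · rw [Finset.sum_cons]
        refine le_iSup_of_le (g i) ?_
        rw [ENNReal.add_iSup]
        exact le_iSup_of_le g le_rfl

end Aux

/-- **Bellman recursion for the optimal value.** The optimal value of a
teleo-environment `ε` equals the maximum over deterministic first actions `a`
of the probability of success this step plus, for each no-success outcome
`(s, ⊥)`, its probability times the optimal value of `ε` evolved by
`(a, (s, ⊥))` (i.e. conditioned on no success). -/
theorem optValue_bellman_recursion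
    {S A : Type} [Fintype S] [Fintype A] [Nonempty A] (ε : Env S A) :
    optValue ε =
      ⨆ a : A, ∑ p : S × Bool,
        ε.out ε.init p * (if p.2 then 1 else optValue (ε.evolve a p)) := by
    classical
  refine le_antisymm ?_ ?_
  · refine iSup_le fun π => iSup_le fun n => ?_
    cases n with
    | zero => exact zero_le
    | succ n =>
        rw [succProb_succ]
        have h1 : ∀ a : A,
            ∑ p : S × Bool, π.out π.init a * ε.out ε.init p *
              (if p.2 then 1 else succProb n (π.evolve p.1 a) (ε.evolve a p))
            ≤ π.out π.init a * ⨆ a' : A, ∑ p : S × Bool,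
                ε.out ε.init p * (if p.2 then 1 else optValue (ε.evolve a' p)) := by
          intro a
          calc ∑ p : S × Bool, π.out π.init a * ε.out ε.init p *
                (if p.2 then 1 else succProb n (π.evolve p.1 a) (ε.evolve a p))
              = π.out π.init a * ∑ p : S × Bool, ε.out ε.init p *
                (if p.2 then 1 else succProb n (π.evolve p.1 a) (ε.evolve a p)) := by
                rw [Finset.mul_sum]; exact Finset.sum_congr rfl fun p _ => by ring
            _ ≤ π.out π.init a * ∑ p : S × Bool, ε.out ε.init p *
                (if p.2 then 1 else optValue (ε.evolve a p)) := by
                refine mul_le_mul_right (Finset.sum_le_sum fun p _ => mul_le_mul_right ?_ _) _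
                by_cases h : p.2 <;> simp [h, succProb_le_optValue]
            _ ≤ _ := mul_le_mul_right
                (le_iSup (fun a' : A => ∑ p : S × Bool,
                  ε.out ε.init p * (if p.2 then 1 else optValue (ε.evolve a' p))) a) _
        calc _ ≤ ∑ a : A, π.out π.init a * ⨆ a' : A, ∑ p : S × Bool,
                ε.out ε.init p * (if p.2 then 1 else optValue (ε.evolve a' p)) :=
              Finset.sum_le_sum fun a _ => h1 a
          _ = _ := by rw [← Finset.sum_mul, π.out_sum, one_mul]
  · refine iSup_le fun a => ?_
    have hopt : ∀ ε' : Env S A,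
        optValue ε' = ⨆ q : Policy S A × ℕ, succProb q.2 q.1 ε' := by
      intro ε'; rw [iSup_prod]; simp only [optValue, value]
    have key : ∀ p : S × Bool,
        ε.out ε.init p * (if p.2 then 1 else optValue (ε.evolve a p)) =
        ⨆ q : Policy S A × ℕ,
          ε.out ε.init p * (if p.2 then 1 else succProb q.2 q.1 (ε.evolve a p)) := by
      intro p; by_cases h : p.2
      · simp [h]
      · rw [if_neg h, hopt, ENNReal.mul_iSup]
        exact iSup_congr fun q => by rw [if_neg h]
    rw [Finset.sum_congr rfl fun p _ => key p, sum_iSup_eq]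
    refine iSup_le fun G => ?_
    set N := Finset.univ.sup fun p : S × Bool => (G p).2 with hN
    set g : S → Policy S A := fun s => (G (s, false)).1 with hg
    have hstep1 : ∑ p : S × Bool, ε.out ε.init p *
          (if p.2 then 1 else succProb (G p).2 (G p).1 (ε.evolve a p))
        ≤ ∑ p : S × Bool, ε.out ε.init p *
          (if p.2 then 1 else succProb N (g p.1) (ε.evolve a p)) := by
      refine Finset.sum_le_sum fun p _ => mul_le_mul_right ?_ _
      rcases p with ⟨s, b⟩
      cases b
      · simpa using succProb_mono (Finset.le_sup (Finset.mem_univ ((s, false) : S × Bool))) _ _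
      · simp
    refine hstep1.trans ?_
    have hsim : ∀ p : S × Bool,
        succProb N ((detFirst a g).evolve p.1 a) (ε.evolve a p) =
          succProb N (g p.1) (ε.evolve a p) := fun p =>
      (succProb_simul N (g p.1) ((detFirst a g).evolve p.1 a)
        (fun st => some ⟨p.1, st⟩) (fun _ _ => rfl) (fun _ _ _ => rfl) rfl _).symm
    have hval : succProb (N + 1) (detFirst a g) ε =
        ∑ p : S × Bool, ε.out ε.init p *
          (if p.2 then 1 else succProb N (g p.1) (ε.evolve a p)) := by
      rw [succProb_succ, Finset.sum_eq_single a]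
      · refine Finset.sum_congr rfl fun p _ => ?_
        have h1 : (detFirst a g).out (detFirst a g).init a = 1 := by
          show (if a = a then (1 : ℝ≥0∞) else 0) = 1
          simp
        rw [h1, one_mul]
        congr 1
        by_cases h : p.2 <;> simp [h, hsim p]
      · intro a' _ ha'
        have h0 : (detFirst a g).out (detFirst a g).init a' = 0 := by
          show (if a' = a then (1 : ℝ≥0∞) else 0) = 0
          simp [ha']
        simp [h0]
      · simp
    rw [← hval]
    exact succProb_le_optValue _ _ _
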